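/- Let E be a nonempty closed convex subset of a Banach space X and T : E → E a contractive-like operator with fixed point p. Let {α_n}, {β_n} ⊂ [0,1) with ∑ α_n = ∞. Define Thianwan's two-step iteration: x_0 ∈ E, y_n = (1 − β_n) x_n + β_n T x_n, x_{n+1} = (1 − α_n) y_n + α_n T y_n. Then x_n converges to p. -/

import Mathlib

open Filter Topology

theorem thianwan_iteration_converges
    {X : Type*} [NormedAddCommGroup X] [NormedSpace ℝ X] [CompleteSpace X]
    (E : Set X) (hEne : E.Nonempty) (hEcl : IsClosed E) (hEco : Convex ℝ E)
    (T : X → X) (hT : Set.MapsTo T E E)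
    (δ : ℝ) (hδ : δ ∈ Set.Ico (0 : ℝ) 1)
    (φ : ℝ → ℝ) (hφmono : StrictMonoOn φ (Set.Ici 0))
    (hφcont : ContinuousOn φ (Set.Ici 0)) (hφ0 : φ 0 = 0)
    (hcontr : ∀ x ∈ E, ∀ y ∈ E, ‖T x - T y‖ ≤ δ * ‖x - y‖ + φ ‖x - T x‖)
    (p : X) (hp : p ∈ E) (hTp : T p = p)
    (α β : ℕ → ℝ)
    (hα : ∀ n, α n ∈ Set.Ico (0 : ℝ) 1)
    (hβ : ∀ n, β n ∈ Set.Ico (0 : ℝ) 1)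
    (hαdiv : Tendsto (fun N => ∑ n ∈ Finset.range N, α n) atTop atTop)
    (x y : ℕ → X) (hx0 : x 0 ∈ E)
    (hy : ∀ n, y n = (1 - β n) • x n + β n • T (x n))
    (hx : ∀ n, x (n + 1) = (1 - α n) • y n + α n • T (y n)) :
    Tendsto x atTop (𝓝 p) := by
  obtain ⟨hδ0, hδ1⟩ := hδ
  -- key contraction toward p
  have key : ∀ z ∈ E, ‖T z - p‖ ≤ δ * ‖z - p‖ := by
    intro z hz
    have h := hcontr p hp z hz
    rw [hTp, sub_self, norm_zero, hφ0, add_zero, norm_sub_rev, norm_sub_rev p z] at h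
    exact h
  -- membership
  have hmem : ∀ n, x n ∈ E ∧ y n ∈ E := by
    intro n
    induction n with
    | zero =>
      refine ⟨hx0, ?_⟩
      rw [hy 0]
      exact hEco hx0 (hT hx0) (by linarith [(hβ 0).1, (hβ 0).2]) (hβ 0).1 (by ring)
    | succ n ih =>
      have hxn : x (n+1) ∈ E := by
        rw [hx n]
        exact hEco ih.2 (hT ih.2) (by linarith [(hα n).1, (hα n).2]) (hα n).1 (by ring)
      refine ⟨hxn, ?_⟩
      rw [hy (n+1)]
      exact hEco hxn (hT hxn)
        (by linarith [(hβ (n+1)).1, (hβ (n+1)).2]) (hβ (n+1)).1 (by ring)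
  -- one-step estimates
  have hystep : ∀ n, ‖y n - p‖ ≤ ‖x n - p‖ := by
    intro n
    have hsplit : y n - p = (1 - β n) • (x n - p) + β n • (T (x n) - p) := by
      rw [hy n]; module
    calc ‖y n - p‖ ≤ (1 - β n) * ‖x n - p‖ + β n * ‖T (x n) - p‖ := by
          rw [hsplit]
          refine (norm_add_le _ _).trans ?_
          rw [norm_smul, norm_smul, Real.norm_eq_abs, Real.norm_eq_abs,
            abs_of_nonneg (by linarith [(hβ n).1, (hβ n).2]), abs_of_nonneg (hβ n).1]
      _ ≤ (1 - β n) * ‖x n - p‖ + β n * (δ * ‖x n - p‖) :=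
          add_le_add_right (mul_le_mul_of_nonneg_left (key _ (hmem n).1) (hβ n).1) _
      _ ≤ ‖x n - p‖ := by
          nlinarith [mul_nonneg (mul_nonneg (hβ n).1 (by linarith : (0:ℝ) ≤ 1 - δ))
            (norm_nonneg (x n - p))]
  have hxstep : ∀ n, ‖x (n+1) - p‖ ≤ (1 - (1 - δ) * α n) * ‖x n - p‖ := by
    intro n
    have hsplit : x (n+1) - p = (1 - α n) • (y n - p) + α n • (T (y n) - p) := by
      rw [hx n]; module
    calc ‖x (n+1) - p‖ ≤ (1 - α n) * ‖y n - p‖ + α n * ‖T (y n) - p‖ := by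
          rw [hsplit]
          refine (norm_add_le _ _).trans ?_
          rw [norm_smul, norm_smul, Real.norm_eq_abs, Real.norm_eq_abs,
            abs_of_nonneg (by linarith [(hα n).1, (hα n).2]), abs_of_nonneg (hα n).1]
      _ ≤ (1 - α n) * ‖y n - p‖ + α n * (δ * ‖y n - p‖) :=
          add_le_add_right (mul_le_mul_of_nonneg_left (key _ (hmem n).2) (hα n).1) _
      _ = (1 - (1 - δ) * α n) * ‖y n - p‖ := by ring
      _ ≤ (1 - (1 - δ) * α n) * ‖x n - p‖ := by
          have : 0 ≤ 1 - (1 - δ) * α n := by nlinarith [(hα n).1, (hα n).2]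
          exact mul_le_mul_of_nonneg_left (hystep n) this
  -- exponential bound
  have hbound : ∀ n, ‖x n - p‖ ≤
      ‖x 0 - p‖ * Real.exp (-(1 - δ) * ∑ k ∈ Finset.range n, α k) := by
    intro n
    induction n with
    | zero => simp
    | succ n ih =>
      calc ‖x (n+1) - p‖ ≤ (1 - (1 - δ) * α n) * ‖x n - p‖ := hxstep n
        _ ≤ Real.exp (-((1 - δ) * α n)) * ‖x n - p‖ := by
            refine mul_le_mul_of_nonneg_right ?_ (norm_nonneg _)
            have := Real.add_one_le_exp (-((1 - δ) * α n))
            linarith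
        _ ≤ Real.exp (-((1 - δ) * α n)) *
            (‖x 0 - p‖ * Real.exp (-(1 - δ) * ∑ k ∈ Finset.range n, α k)) := by
            exact mul_le_mul_of_nonneg_left ih (Real.exp_pos _).le
        _ = ‖x 0 - p‖ * Real.exp (-(1 - δ) * ∑ k ∈ Finset.range (n+1), α k) := by
            rw [Finset.sum_range_succ, mul_add, Real.exp_add]
            ring_nf
  -- convergence
  have hlim : Tendsto (fun n => ‖x 0 - p‖ *
      Real.exp (-(1 - δ) * ∑ k ∈ Finset.range n, α k)) atTop (𝓝 0) := by
    rw [show (0 : ℝ) = ‖x 0 - p‖ * 0 by ring]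
    refine Tendsto.const_mul _ ?_
    refine Real.tendsto_exp_atBot.comp ?_
    have : Tendsto (fun n => (1 - δ) * ∑ k ∈ Finset.range n, α k) atTop atTop :=
      hαdiv.const_mul_atTop (by linarith)
    have h2 : Tendsto (fun n => -((1 - δ) * ∑ k ∈ Finset.range n, α k)) atTop atBot :=
      tendsto_neg_atTop_atBot.comp this
    exact h2.congr (fun n => by ring)
  have hnorm : Tendsto (fun n => ‖x n - p‖) atTop (𝓝 0) :=
    squeeze_zero (fun n => norm_nonneg _) hbound hlim
  have := tendsto_iff_norm_sub_tendsto_zero.mpr hnorm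
  simpa using this
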